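/- Let Δt ≥ 0 and let I denote the d×d identity matrix. For s ∈ ℝ and a d×d matrix F define Ψ(s)(F) := (I + (Δt − s)J) · 𝓛_L((I + sJ) · F · (I + sJ)ᴴ) · (I + (Δt − s)J)ᴴ. Then for every s ∈ [0, Δt] and every Hermitian d×d matrix F with ‖F‖₁ ≤ 1, the second derivative at s of the function r ↦ Ψ(r)(F) satisfies ‖(d²/ds²)Ψ(s)(F)‖₁ ≤ 12 · κ_L · ‖J‖₁² · e^{‖J‖₁ Δt}. -/

import Mathlib

open MeasureTheory Filter
open scoped Matrix ComplexOrder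

attribute [local instance] Matrix.normedAddCommGroup Matrix.normedSpace

/-- The positive semidefinite square root of a positive semidefinite matrix
(re-added: removed from Mathlib; this is its old definition). -/
noncomputable def Matrix.PosSemidef.sqrt {n 𝕜 : Type*} [Fintype n] [DecidableEq n] [RCLike 𝕜]
    {A : Matrix n n 𝕜} (hA : A.PosSemidef) : Matrix n n 𝕜 :=
  hA.1.eigenvectorUnitary.1 * Matrix.diagonal ((↑) ∘ (√·) ∘ hA.1.eigenvalues) *
  (star hA.1.eigenvectorUnitary : Matrix n n 𝕜)

/-- Trace norm (Schatten-1 norm) of a complex matrix: `‖A‖₁ = Tr √(Aᴴ A)`. -/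
noncomputable def traceNorm {d : ℕ} (A : Matrix (Fin d) (Fin d) ℂ) : ℝ :=
  ((Matrix.posSemidef_conjTranspose_mul_self A).sqrt).trace.re

/-- The superoperator `ρ ↦ A * ρ * B`. -/
noncomputable def sandwich {d : ℕ} (A B : Matrix (Fin d) (Fin d) ℂ) :
    Matrix (Fin d) (Fin d) ℂ →ₗ[ℂ] Matrix (Fin d) (Fin d) ℂ :=
  (LinearMap.mulLeft ℂ A).comp (LinearMap.mulRight ℂ B)

/-- The completely positive part `𝓛_L(ρ) = ∑ k, L_k ρ L_kᴴ`. -/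
noncomputable def LLop {d κ : ℕ} (L : Fin κ → Matrix (Fin d) (Fin d) ℂ) :
    Matrix (Fin d) (Fin d) ℂ →ₗ[ℂ] Matrix (Fin d) (Fin d) ℂ :=
  ∑ k, sandwich (L k) ((L k)ᴴ)

/-- The superoperator `𝓛_J(ρ) = J ρ + ρ Jᴴ`, as a continuous linear endomorphism. -/
noncomputable def LJop {d : ℕ} (J : Matrix (Fin d) (Fin d) ℂ) :
    Matrix (Fin d) (Fin d) ℂ →L[ℂ] Matrix (Fin d) (Fin d) ℂ :=
  LinearMap.toContinuousLinearMap (LinearMap.mulLeft ℂ J + LinearMap.mulRight ℂ Jᴴ)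

/-- The Lindblad generator
`𝓛(ρ) = -i(Hρ - ρH) + ∑ k (L_k ρ L_kᴴ - ½(L_kᴴ L_k ρ + ρ L_kᴴ L_k))`. -/
noncomputable def lindbladOp {d κ : ℕ} (H : Matrix (Fin d) (Fin d) ℂ)
    (L : Fin κ → Matrix (Fin d) (Fin d) ℂ) :
    Matrix (Fin d) (Fin d) ℂ →L[ℂ] Matrix (Fin d) (Fin d) ℂ :=
  LinearMap.toContinuousLinearMap
    ((-Complex.I) • (LinearMap.mulLeft ℂ H - LinearMap.mulRight ℂ H)
      + ∑ k, (sandwich (L k) ((L k)ᴴ)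
          - (1 / 2 : ℂ) • (LinearMap.mulLeft ℂ ((L k)ᴴ * L k)
              + LinearMap.mulRight ℂ ((L k)ᴴ * L k))))


open scoped InnerProductSpace

section AuxTraceNorm


lemma trace_sqrt_eq_sum {d : ℕ} {M : Matrix (Fin d) (Fin d) ℂ} (hM : M.PosSemidef) :
    (hM.sqrt).trace.re = ∑ j, Real.sqrt (hM.1.eigenvalues j) := by
  rw [Matrix.PosSemidef.sqrt, mul_assoc, Matrix.trace_mul_comm, mul_assoc,
    show ((star hM.1.eigenvectorUnitary : Matrix (Fin d) (Fin d) ℂ) *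
      (hM.1.eigenvectorUnitary.1)) = 1 from hM.1.eigenvectorUnitary.2.1,
    mul_one, Matrix.trace_diagonal]
  rw [Complex.re_sum]
  simp

lemma traceNorm_eq_sum {d : ℕ} (A : Matrix (Fin d) (Fin d) ℂ) :
    traceNorm A = ∑ j, Real.sqrt ((Matrix.posSemidef_conjTranspose_mul_self A).1.eigenvalues j) :=
  trace_sqrt_eq_sum _

lemma traceNorm_nonneg {d : ℕ} (A : Matrix (Fin d) (Fin d) ℂ) : 0 ≤ traceNorm A := by
  rw [traceNorm_eq_sum]
  exact Finset.sum_nonneg fun j _ => Real.sqrt_nonneg _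

/-- Bessel-type inequality for pairwise-orthogonal families with norms at most 1. -/
lemma bessel' {ι : Type*} [Fintype ι] {E : Type*} [NormedAddCommGroup E]
    [InnerProductSpace ℂ E] (v : ι → E)
    (horth : ∀ i j, i ≠ j → ⟪v i, v j⟫_ℂ = 0) (hn : ∀ i, ‖v i‖ ≤ 1) (z : E) :
    ∑ i, ‖⟪v i, z⟫_ℂ‖ ^ 2 ≤ ‖z‖ ^ 2 := by
  set c : ι → ℂ := fun i => ⟪v i, z⟫_ℂ with hc
  set w : E := ∑ i, c i • v i with hw
  have h1 : ⟪w, z⟫_ℂ = ((∑ i, ‖c i‖ ^ 2 : ℝ) : ℂ) := by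
    rw [hw, sum_inner]
    push_cast
    refine Finset.sum_congr rfl fun i _ => ?_
    rw [inner_smul_left]
    show (starRingEnd ℂ) (c i) * c i = _
    rw [RCLike.conj_mul]
    norm_cast
  have h2 : ‖w‖ ^ 2 ≤ ∑ i, ‖c i‖ ^ 2 := by
    have key : ⟪w, w⟫_ℂ = ∑ i, (starRingEnd ℂ) (c i) * c i * ⟪v i, v i⟫_ℂ := by
      rw [hw, sum_inner]
      refine Finset.sum_congr rfl fun i _ => ?_
      rw [inner_smul_left, inner_sum]
      rw [Finset.sum_eq_single i]
      · rw [inner_smul_right]; ring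
      · intro j _ hj
        rw [inner_smul_right, horth i j (Ne.symm hj), mul_zero]
      · intro h; exact absurd (Finset.mem_univ i) h
    have h3 : (‖w‖ ^ 2 : ℝ) = ∑ i, ‖c i‖ ^ 2 * ‖v i‖ ^ 2 := by
      simp only [RCLike.conj_mul, inner_self_eq_norm_sq_to_K (𝕜 := ℂ)] at key
      exact_mod_cast key
    rw [h3]
    refine Finset.sum_le_sum fun i _ => ?_
    have h4 : ‖v i‖ ^ 2 ≤ 1 := by
      have := hn i; nlinarith [norm_nonneg (v i)]
    nlinarith [sq_nonneg ‖c i‖]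
  have h5 : ‖z - w‖ ^ 2 = ‖z‖ ^ 2 - 2 * (∑ i, ‖c i‖ ^ 2) + ‖w‖ ^ 2 := by
    rw [@norm_sub_sq ℂ]
    congr 2
    rw [← inner_conj_symm, h1]
    norm_cast
  have hgoal : ∑ i, ‖⟪v i, z⟫_ℂ‖ ^ 2 = ∑ i, ‖c i‖ ^ 2 := rfl
  rw [hgoal]
  nlinarith [sq_nonneg ‖z - w‖, h2, h5]

noncomputable abbrev applyMat {d : ℕ} (A : Matrix (Fin d) (Fin d) ℂ)
    (x : EuclideanSpace ℂ (Fin d)) : EuclideanSpace ℂ (Fin d) :=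
  Matrix.toEuclideanLin A x

lemma inner_applyMat {d : ℕ} (A : Matrix (Fin d) (Fin d) ℂ) (x y : EuclideanSpace ℂ (Fin d)) :
    ⟪applyMat A x, applyMat A y⟫_ℂ = ⟪x, applyMat (Aᴴ * A) y⟫_ℂ := by
  rw [EuclideanSpace.inner_eq_star_dotProduct, EuclideanSpace.inner_eq_star_dotProduct]
  show dotProduct (A *ᵥ (WithLp.equiv 2 _ y)) (star (A *ᵥ (WithLp.equiv 2 _ x)))
    = dotProduct ((Aᴴ * A) *ᵥ (WithLp.equiv 2 _ y)) (star (WithLp.equiv 2 _ x))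
  rw [dotProduct_comm, dotProduct_comm ((Aᴴ * A) *ᵥ _)]
  simp only [Matrix.star_mulVec, Matrix.dotProduct_mulVec, Matrix.vecMul_vecMul]

/-- The abstract summation lemma. -/
lemma abstract_sum_le {d : ℕ} {ι : Type*} [Fintype ι]
    (T : EuclideanSpace ℂ (Fin d) →ₗ[ℂ] EuclideanSpace ℂ (Fin d))
    (u : OrthonormalBasis (Fin d) ℂ (EuclideanSpace ℂ (Fin d)))
    (σ : Fin d → ℝ) (hσ0 : ∀ j, 0 ≤ σ j) (hσ : ∀ j, ‖T (u j)‖ ≤ σ j)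
    (v w : ι → EuclideanSpace ℂ (Fin d))
    (hv : ∀ i j, i ≠ j → ⟪v i, v j⟫_ℂ = 0) (hvn : ∀ i, ‖v i‖ ≤ 1)
    (hw : ∀ i j, i ≠ j → ⟪w i, w j⟫_ℂ = 0) (hwn : ∀ i, ‖w i‖ ≤ 1) :
    ∑ i, ‖⟪w i, T (v i)⟫_ℂ‖ ≤ ∑ j, σ j := by
  have expand : ∀ i, ⟪w i, T (v i)⟫_ℂ = ∑ j, ⟪u j, v i⟫_ℂ * ⟪w i, T (u j)⟫_ℂ := by
    intro i
    conv_lhs => rw [← u.sum_repr' (v i)]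
    rw [map_sum, inner_sum]
    refine Finset.sum_congr rfl fun j _ => ?_
    rw [_root_.map_smul, inner_smul_right]
  calc ∑ i, ‖⟪w i, T (v i)⟫_ℂ‖
      ≤ ∑ i, ∑ j, ‖⟪u j, v i⟫_ℂ‖ * ‖⟪w i, T (u j)⟫_ℂ‖ := by
        refine Finset.sum_le_sum fun i _ => ?_
        rw [expand i]
        refine (norm_sum_le _ _).trans ?_
        refine Finset.sum_le_sum fun j _ => ?_
        rw [norm_mul]
    _ = ∑ j, ∑ i, ‖⟪u j, v i⟫_ℂ‖ * ‖⟪w i, T (u j)⟫_ℂ‖ := Finset.sum_comm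
    _ ≤ ∑ j, σ j := by
        refine Finset.sum_le_sum fun j _ => ?_
        calc ∑ i, ‖⟪u j, v i⟫_ℂ‖ * ‖⟪w i, T (u j)⟫_ℂ‖
            ≤ Real.sqrt (∑ i, ‖⟪u j, v i⟫_ℂ‖ ^ 2) * Real.sqrt (∑ i, ‖⟪w i, T (u j)⟫_ℂ‖ ^ 2) :=
              Real.sum_mul_le_sqrt_mul_sqrt _ _ _
          _ ≤ 1 * σ j := by
              have b1 : ∑ i, ‖⟪u j, v i⟫_ℂ‖ ^ 2 ≤ 1 := by
                have : ∑ i, ‖⟪v i, u j⟫_ℂ‖ ^ 2 ≤ ‖u j‖ ^ 2 := bessel' v hv hvn (u j)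
                rw [u.orthonormal.1 j] at this
                simpa only [one_pow, norm_inner_symm] using this
              have b2 : ∑ i, ‖⟪w i, T (u j)⟫_ℂ‖ ^ 2 ≤ σ j ^ 2 := by
                refine (bessel' w hw hwn (T (u j))).trans ?_
                have := hσ j
                nlinarith [norm_nonneg (T (u j))]
              exact mul_le_mul (Real.sqrt_le_one.mpr b1)
                ((Real.sqrt_le_sqrt b2).trans_eq (Real.sqrt_sq (hσ0 j)))
                (Real.sqrt_nonneg _) zero_le_one
          _ = σ j := one_mul _

section EigenData
variable {d : ℕ}

lemma inner_applyMat_conjTranspose (A : Matrix (Fin d) (Fin d) ℂ)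
    (x y : EuclideanSpace ℂ (Fin d)) :
    ⟪applyMat Aᴴ x, y⟫_ℂ = ⟪x, applyMat A y⟫_ℂ := by
  rw [EuclideanSpace.inner_eq_star_dotProduct, EuclideanSpace.inner_eq_star_dotProduct]
  show dotProduct ((WithLp.equiv 2 _ y)) (star (Aᴴ *ᵥ (WithLp.equiv 2 _ x)))
    = dotProduct (A *ᵥ (WithLp.equiv 2 _ y)) (star (WithLp.equiv 2 _ x))
  rw [dotProduct_comm, dotProduct_comm (A *ᵥ _)]
  simp only [Matrix.star_mulVec, Matrix.conjTranspose_conjTranspose, Matrix.dotProduct_mulVec]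

/-- `applyMat` of a hermitian matrix on its eigenbasis. -/
lemma applyMat_eigen {M : Matrix (Fin d) (Fin d) ℂ} (hM : M.IsHermitian) (j : Fin d) :
    applyMat M (hM.eigenvectorBasis j) = ((hM.eigenvalues j : ℝ) : ℂ) • hM.eigenvectorBasis j := by
  apply (WithLp.equiv 2 (Fin d → ℂ)).injective
  have h := hM.mulVec_eigenvectorBasis j
  show M *ᵥ (WithLp.equiv 2 _ (hM.eigenvectorBasis j)) = _
  rw [show (WithLp.equiv 2 (Fin d → ℂ)) (((hM.eigenvalues j : ℝ) : ℂ) • hM.eigenvectorBasis j)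
    = ((hM.eigenvalues j : ℝ) : ℂ) • (WithLp.equiv 2 (Fin d → ℂ)) (hM.eigenvectorBasis j) from rfl]
  rw [show (WithLp.equiv 2 (Fin d → ℂ)) (hM.eigenvectorBasis j) = ⇑(hM.eigenvectorBasis j) from rfl]
  rw [h]
  ext i
  simp [Complex.real_smul]

variable (C : Matrix (Fin d) (Fin d) ℂ)

lemma inner_applyMat_self_eigen (i j : Fin d) :
    ⟪applyMat C ((Matrix.posSemidef_conjTranspose_mul_self C).1.eigenvectorBasis i),
     applyMat C ((Matrix.posSemidef_conjTranspose_mul_self C).1.eigenvectorBasis j)⟫_ℂ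
    = (((Matrix.posSemidef_conjTranspose_mul_self C).1.eigenvalues j : ℝ) : ℂ) *
      ⟪(Matrix.posSemidef_conjTranspose_mul_self C).1.eigenvectorBasis i,
       (Matrix.posSemidef_conjTranspose_mul_self C).1.eigenvectorBasis j⟫_ℂ := by
  rw [inner_applyMat, applyMat_eigen, inner_smul_right]

lemma norm_applyMat_eigen (j : Fin d) :
    ‖applyMat C ((Matrix.posSemidef_conjTranspose_mul_self C).1.eigenvectorBasis j)‖
      = Real.sqrt ((Matrix.posSemidef_conjTranspose_mul_self C).1.eigenvalues j) := by
  set hH := (Matrix.posSemidef_conjTranspose_mul_self C).1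
  have h1 : (‖applyMat C (hH.eigenvectorBasis j)‖ : ℝ) ^ 2 = hH.eigenvalues j := by
    rw [← inner_self_eq_norm_sq (𝕜 := ℂ), inner_applyMat_self_eigen]
    simp [inner_self_eq_norm_sq_to_K (𝕜 := ℂ), hH.eigenvectorBasis.orthonormal.1 j]
  rw [← h1, Real.sqrt_sq (norm_nonneg _)]

lemma traceNorm_eq_sum_norm :
    traceNorm C = ∑ j, ‖applyMat C ((Matrix.posSemidef_conjTranspose_mul_self C).1.eigenvectorBasis j)‖ := by
  rw [traceNorm_eq_sum]
  exact Finset.sum_congr rfl fun j _ => (norm_applyMat_eigen C j).symm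

/-- Key lemma: sums of matrix elements between subnormal orthogonal families are
bounded by the trace norm. -/
lemma sum_inner_le_traceNorm {ι : Type*} [Fintype ι] (v w : ι → EuclideanSpace ℂ (Fin d))
    (hv : ∀ i j, i ≠ j → ⟪v i, v j⟫_ℂ = 0) (hvn : ∀ i, ‖v i‖ ≤ 1)
    (hw : ∀ i j, i ≠ j → ⟪w i, w j⟫_ℂ = 0) (hwn : ∀ i, ‖w i‖ ≤ 1) :
    ∑ i, ‖⟪w i, applyMat C (v i)⟫_ℂ‖ ≤ traceNorm C := by
  rw [traceNorm_eq_sum]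
  exact abstract_sum_le (Matrix.toEuclideanLin C)
    (Matrix.posSemidef_conjTranspose_mul_self C).1.eigenvectorBasis
    _ (fun j => Real.sqrt_nonneg _) (fun j => (norm_applyMat_eigen C j).le)
    v w hv hvn hw hwn

lemma norm_applyMat_le (y : EuclideanSpace ℂ (Fin d)) :
    ‖applyMat C y‖ ≤ traceNorm C * ‖y‖ := by
  set u := (Matrix.posSemidef_conjTranspose_mul_self C).1.eigenvectorBasis with hu
  have hy : applyMat C y = ∑ j, ⟪u j, y⟫_ℂ • applyMat C (u j) := by
    conv_lhs => rw [← u.sum_repr' y]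
    simp only [applyMat, map_sum, _root_.map_smul]
  rw [hy, traceNorm_eq_sum_norm]
  refine (norm_sum_le _ _).trans ?_
  rw [Finset.sum_mul]
  refine Finset.sum_le_sum fun j _ => ?_
  rw [norm_smul]
  exact mul_le_mul (norm_inner_le_norm (𝕜 := ℂ) (u j) y |>.trans
    (by rw [u.orthonormal.1 j, one_mul])) le_rfl (norm_nonneg _) (norm_nonneg _)
    |>.trans_eq (mul_comm _ _)

/-- The attaining dual family. -/
lemma exists_attain :
    ∃ w : Fin d → EuclideanSpace ℂ (Fin d),
      (∀ i j, i ≠ j → ⟪w i, w j⟫_ℂ = 0) ∧ (∀ i, ‖w i‖ ≤ 1) ∧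
      ∀ j, ‖⟪w j, applyMat C ((Matrix.posSemidef_conjTranspose_mul_self C).1.eigenvectorBasis j)⟫_ℂ‖
        = ‖applyMat C ((Matrix.posSemidef_conjTranspose_mul_self C).1.eigenvectorBasis j)‖ := by
  classical
  set u := (Matrix.posSemidef_conjTranspose_mul_self C).1.eigenvectorBasis with hu
  refine ⟨fun j => if h : applyMat C (u j) = 0 then 0 else
    ((‖applyMat C (u j)‖ : ℝ) : ℂ)⁻¹ • applyMat C (u j), ?_, ?_, ?_⟩
  · intro i j hij
    by_cases hi : applyMat C (u i) = 0
    · simp [hi]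
    by_cases hj : applyMat C (u j) = 0
    · simp [hi, hj]
    simp only [dif_neg hi, dif_neg hj]
    rw [inner_smul_left, inner_smul_right, inner_applyMat_self_eigen]
    rw [u.orthonormal.2 hij]
    simp
  · intro i
    by_cases hi : applyMat C (u i) = 0
    · simp [hi]
    · simp only [dif_neg hi]
      rw [norm_smul, norm_inv, Complex.norm_real, Real.norm_of_nonneg (norm_nonneg _)]
      exact le_of_eq (inv_mul_cancel₀ (norm_ne_zero_iff.mpr hi))
  · intro j
    by_cases hj : applyMat C (u j) = 0
    · simp [hj]
    · simp only [dif_neg hj]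
      rw [inner_smul_left, inner_self_eq_norm_sq_to_K (𝕜 := ℂ), map_inv₀, Complex.conj_ofReal]
      have hn : (0:ℝ) < ‖applyMat C (u j)‖ := norm_pos_iff.mpr hj
      simp only [norm_mul, norm_inv, norm_pow, RCLike.norm_ofReal, abs_norm]
      rw [pow_two]
      field_simp
      rw [Complex.norm_real, Real.norm_of_nonneg (norm_nonneg _), div_self hn.ne']

end EigenData

section NormLemmas
variable {d : ℕ}

lemma applyMat_add (A B : Matrix (Fin d) (Fin d) ℂ) (x : EuclideanSpace ℂ (Fin d)) :
    applyMat (A + B) x = applyMat A x + applyMat B x := by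
  simp only [applyMat, map_add, LinearMap.add_apply]

lemma applyMat_mul (A B : Matrix (Fin d) (Fin d) ℂ) (x : EuclideanSpace ℂ (Fin d)) :
    applyMat (A * B) x = applyMat A (applyMat B x) := by
  apply (WithLp.equiv 2 (Fin d → ℂ)).injective
  show (A * B) *ᵥ _ = A *ᵥ (B *ᵥ _)
  rw [Matrix.mulVec_mulVec]

lemma real_smul_matrix (r : ℝ) (A : Matrix (Fin d) (Fin d) ℂ) : r • A = (r : ℂ) • A := by
  ext i j; simp [Complex.real_smul]

lemma applyMat_smul (r : ℝ) (A : Matrix (Fin d) (Fin d) ℂ) (x : EuclideanSpace ℂ (Fin d)) :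
    applyMat (r • A) x = (r : ℂ) • applyMat A x := by
  rw [real_smul_matrix]
  simp only [applyMat, _root_.map_smul, LinearMap.smul_apply]

lemma ortho_basis_fam (u : OrthonormalBasis (Fin d) ℂ (EuclideanSpace ℂ (Fin d))) :
    (∀ i j, i ≠ j → ⟪u i, u j⟫_ℂ = 0) ∧ (∀ i, ‖u i‖ ≤ 1) :=
  ⟨fun _ _ hij => u.orthonormal.2 hij, fun i => le_of_eq (u.orthonormal.1 i)⟩

lemma traceNorm_add_le (A B : Matrix (Fin d) (Fin d) ℂ) :
    traceNorm (A + B) ≤ traceNorm A + traceNorm B := by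
  obtain ⟨w, hw, hwn, hwa⟩ := exists_attain (A + B)
  set u := (Matrix.posSemidef_conjTranspose_mul_self (A + B)).1.eigenvectorBasis with hu
  obtain ⟨hv, hvn⟩ := ortho_basis_fam u
  rw [traceNorm_eq_sum_norm (A + B)]
  calc ∑ j, ‖applyMat (A + B) (u j)‖
      = ∑ j, ‖⟪w j, applyMat (A + B) (u j)⟫_ℂ‖ :=
        (Finset.sum_congr rfl fun j _ => (hwa j).symm)
    _ ≤ ∑ j, (‖⟪w j, applyMat A (u j)⟫_ℂ‖ + ‖⟪w j, applyMat B (u j)⟫_ℂ‖) := by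
        refine Finset.sum_le_sum fun j _ => ?_
        rw [applyMat_add, inner_add_right]
        exact norm_add_le _ _
    _ = (∑ j, ‖⟪w j, applyMat A (u j)⟫_ℂ‖) + ∑ j, ‖⟪w j, applyMat B (u j)⟫_ℂ‖ :=
        Finset.sum_add_distrib
    _ ≤ traceNorm A + traceNorm B :=
        add_le_add (sum_inner_le_traceNorm A u w hv hvn hw hwn)
          (sum_inner_le_traceNorm B u w hv hvn hw hwn)

lemma traceNorm_smul_le (r : ℝ) (A : Matrix (Fin d) (Fin d) ℂ) :
    traceNorm (r • A) ≤ |r| * traceNorm A := by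
  obtain ⟨w, hw, hwn, hwa⟩ := exists_attain (r • A)
  set u := (Matrix.posSemidef_conjTranspose_mul_self (r • A)).1.eigenvectorBasis with hu
  obtain ⟨hv, hvn⟩ := ortho_basis_fam u
  rw [traceNorm_eq_sum_norm (r • A)]
  calc ∑ j, ‖applyMat (r • A) (u j)‖
      = ∑ j, ‖⟪w j, applyMat (r • A) (u j)⟫_ℂ‖ :=
        (Finset.sum_congr rfl fun j _ => (hwa j).symm)
    _ = ∑ j, |r| * ‖⟪w j, applyMat A (u j)⟫_ℂ‖ := by
        refine Finset.sum_congr rfl fun j _ => ?_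
        rw [applyMat_smul, inner_smul_right, norm_mul, Complex.norm_real, Real.norm_eq_abs]
    _ = |r| * ∑ j, ‖⟪w j, applyMat A (u j)⟫_ℂ‖ := by rw [Finset.mul_sum]
    _ ≤ |r| * traceNorm A := by
        exact mul_le_mul_of_nonneg_left
          (sum_inner_le_traceNorm A u w hv hvn hw hwn) (abs_nonneg r)

lemma traceNorm_mul_le (A B : Matrix (Fin d) (Fin d) ℂ) :
    traceNorm (A * B) ≤ traceNorm A * traceNorm B := by
  obtain ⟨w, hw, hwn, hwa⟩ := exists_attain (A * B)
  set u := (Matrix.posSemidef_conjTranspose_mul_self (A * B)).1.eigenvectorBasis with hu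
  obtain ⟨hv, hvn⟩ := ortho_basis_fam u
  set p := (Matrix.posSemidef_conjTranspose_mul_self B).1.eigenvectorBasis with hp
  rw [traceNorm_eq_sum_norm (A * B)]
  calc ∑ j, ‖applyMat (A * B) (u j)‖
      = ∑ j, ‖⟪w j, applyMat (A * B) (u j)⟫_ℂ‖ :=
        (Finset.sum_congr rfl fun j _ => (hwa j).symm)
    _ ≤ ∑ l, traceNorm A *
        Real.sqrt ((Matrix.posSemidef_conjTranspose_mul_self B).1.eigenvalues l) := by
        refine abstract_sum_le (Matrix.toEuclideanLin (A * B)) p _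
          (fun l => mul_nonneg (traceNorm_nonneg A) (Real.sqrt_nonneg _)) ?_ u w hv hvn hw hwn
        intro l
        have h1 : Matrix.toEuclideanLin (A * B) (p l) = applyMat A (applyMat B (p l)) :=
          applyMat_mul A B (p l)
        rw [h1, ← norm_applyMat_eigen B l]
        exact norm_applyMat_le A _
    _ = traceNorm A * traceNorm B := by
        rw [← Finset.mul_sum, traceNorm_eq_sum B]

lemma traceNorm_conjTranspose_le (A : Matrix (Fin d) (Fin d) ℂ) :
    traceNorm Aᴴ ≤ traceNorm A := by
  obtain ⟨w, hw, hwn, hwa⟩ := exists_attain Aᴴ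
  set u := (Matrix.posSemidef_conjTranspose_mul_self Aᴴ).1.eigenvectorBasis with hu
  obtain ⟨hv, hvn⟩ := ortho_basis_fam u
  rw [traceNorm_eq_sum_norm Aᴴ]
  calc ∑ j, ‖applyMat Aᴴ (u j)‖
      = ∑ j, ‖⟪w j, applyMat Aᴴ (u j)⟫_ℂ‖ :=
        (Finset.sum_congr rfl fun j _ => (hwa j).symm)
    _ = ∑ j, ‖⟪u j, applyMat A (w j)⟫_ℂ‖ := by
        refine Finset.sum_congr rfl fun j _ => ?_
        rw [← norm_inner_symm, inner_applyMat_conjTranspose]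
    _ ≤ traceNorm A := sum_inner_le_traceNorm A w u hw hwn hv hvn

lemma traceNorm_conjTranspose (A : Matrix (Fin d) (Fin d) ℂ) :
    traceNorm Aᴴ = traceNorm A := by
  refine le_antisymm (traceNorm_conjTranspose_le A) ?_
  have := traceNorm_conjTranspose_le Aᴴ
  rwa [Matrix.conjTranspose_conjTranspose] at this

lemma sqrt_congr {M N : Matrix (Fin d) (Fin d) ℂ} (hM : M.PosSemidef) (hN : N.PosSemidef)
    (h : M = N) : hM.sqrt = hN.sqrt := by subst h; rfl

lemma traceNorm_congr (X Y : Matrix (Fin d) (Fin d) ℂ) (h : Xᴴ * X = Yᴴ * Y) :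
    traceNorm X = traceNorm Y := by
  unfold traceNorm
  rw [sqrt_congr _ _ h]

lemma traceNorm_neg (A : Matrix (Fin d) (Fin d) ℂ) : traceNorm (-A) = traceNorm A :=
  traceNorm_congr _ _ (by simp)

end NormLemmas

end AuxTraceNorm

section AuxDeriv

lemma hasDerivAt_poly4 {M : Type*} [NormedAddCommGroup M] [NormedSpace ℝ M]
    (c0 c1 c2 c3 c4 : M) (x : ℝ) :
    HasDerivAt (fun r : ℝ => c0 + r • c1 + r^2 • c2 + r^3 • c3 + r^4 • c4)
      (c1 + (2*x) • c2 + (3*x^2) • c3 + (4*x^3) • c4) x := by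
  have h0 : HasDerivAt (fun _ : ℝ => c0) 0 x := hasDerivAt_const x c0
  have h1 : HasDerivAt (fun r : ℝ => r • c1) ((1:ℝ) • c1) x := (hasDerivAt_id x).smul_const c1
  have h2 : HasDerivAt (fun r : ℝ => r^2 • c2) ((↑2 * x^1) • c2) x :=
    (hasDerivAt_pow 2 x).smul_const c2
  have h3 : HasDerivAt (fun r : ℝ => r^3 • c3) ((↑3 * x^2) • c3) x :=
    (hasDerivAt_pow 3 x).smul_const c3
  have h4 : HasDerivAt (fun r : ℝ => r^4 • c4) ((↑4 * x^3) • c4) x :=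
    (hasDerivAt_pow 4 x).smul_const c4
  have := ((((h0.add h1).add h2).add h3).add h4)
  convert this using 1
  · rfl
  push_cast
  module

lemma hasDerivAt_poly4' {M : Type*} [NormedAddCommGroup M] [NormedSpace ℝ M]
    (c1 c2 c3 c4 : M) (x : ℝ) :
    HasDerivAt (fun r : ℝ => c1 + (2*r) • c2 + (3*r^2) • c3 + (4*r^3) • c4)
      ((2:ℝ) • c2 + (6*x) • c3 + (12*x^2) • c4) x := by
  have h0 : HasDerivAt (fun _ : ℝ => c1) 0 x := hasDerivAt_const x c1
  have h2 : HasDerivAt (fun r : ℝ => (2*r) • c2) ((2:ℝ) • c2) x := by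
    simpa using ((hasDerivAt_id x).const_mul (2:ℝ)).smul_const c2
  have h3 : HasDerivAt (fun r : ℝ => (3*r^2) • c3) ((3*(↑2 * x^1)) • c3) x := by
    simpa using ((hasDerivAt_pow 2 x).const_mul (3:ℝ)).smul_const c3
  have h4 : HasDerivAt (fun r : ℝ => (4*r^3) • c4) ((4*(↑3 * x^2)) • c4) x := by
    simpa using ((hasDerivAt_pow 3 x).const_mul (4:ℝ)).smul_const c4
  have := (((h0.add h2).add h3).add h4)
  convert this using 1
  · rfl
  push_cast
  module

lemma iteratedDeriv_two_poly4 {M : Type*} [NormedAddCommGroup M] [NormedSpace ℝ M]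
    (c0 c1 c2 c3 c4 : M) (s : ℝ) :
    iteratedDeriv 2 (fun r : ℝ => c0 + r • c1 + r^2 • c2 + r^3 • c3 + r^4 • c4) s
      = (2:ℝ) • c2 + (6*s) • c3 + (12*s^2) • c4 := by
  rw [iteratedDeriv_succ, iteratedDeriv_one]
  have hd : deriv (fun r : ℝ => c0 + r • c1 + r^2 • c2 + r^3 • c3 + r^4 • c4)
      = fun x => c1 + (2*x) • c2 + (3*x^2) • c3 + (4*x^3) • c4 := by
    funext x
    exact (hasDerivAt_poly4 c0 c1 c2 c3 c4 x).deriv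
  rw [hd]
  exact (hasDerivAt_poly4' c1 c2 c3 c4 s).deriv

end AuxDeriv


lemma conjTranspose_one_add_smul {d : ℕ} (J : Matrix (Fin d) (Fin d) ℂ) (a : ℝ) :
    ((1 : Matrix (Fin d) (Fin d) ℂ) + a • J)ᴴ = 1 + a • Jᴴ := by
  rw [Matrix.conjTranspose_add, Matrix.conjTranspose_one, real_smul_matrix, real_smul_matrix,
    Matrix.conjTranspose_smul, Complex.star_def, Complex.conj_ofReal]

lemma mid_expand {d : ℕ} (J F : Matrix (Fin d) (Fin d) ℂ) (r : ℝ) :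
    (1 + r • J) * F * (1 + r • Jᴴ)
      = F + r • (J * F + F * Jᴴ) + (r^2) • (J * (F * Jᴴ)) := by
  rw [real_smul_matrix r J, real_smul_matrix r Jᴴ, real_smul_matrix r _, real_smul_matrix (r^2) _]
  push_cast
  simp only [mul_add, add_mul, one_mul, mul_one, smul_mul_assoc, mul_smul_comm, smul_smul,
    smul_add, mul_assoc, pow_two]
  abel_nf

/-- The second derivative of the sandwiched quadratic polynomial. -/
lemma second_deriv_psi {d : ℕ} (J G0 G1 G2 : Matrix (Fin d) (Fin d) ℂ) (Δt s : ℝ) :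
    iteratedDeriv 2 (fun r : ℝ =>
        (1 + (Δt - r) • J) * (G0 + r • G1 + r^2 • G2) * (1 + (Δt - r) • Jᴴ)) s
      = (2:ℝ) • G2 + (-2:ℝ) • (J * G1 + G1 * Jᴴ) + (2*Δt-6*s) • (J * G2 + G2 * Jᴴ)
        + (2:ℝ) • (J * (G0 * Jᴴ)) + (6*s-4*Δt) • (J * (G1 * Jᴴ))
        + (2*Δt^2-12*s*Δt+12*s^2) • (J * (G2 * Jᴴ)) := by
  have hfun : (fun r : ℝ =>
        (1 + (Δt - r) • J) * (G0 + r • G1 + r^2 • G2) * (1 + (Δt - r) • Jᴴ))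
      = fun r : ℝ =>
        (G0 + Δt • (J * G0 + G0 * Jᴴ) + (Δt^2) • (J * (G0 * Jᴴ)))
        + r • (G1 - (J * G0 + G0 * Jᴴ) + Δt • (J * G1 + G1 * Jᴴ)
            - (2*Δt) • (J * (G0 * Jᴴ)) + (Δt^2) • (J * (G1 * Jᴴ)))
        + r^2 • (G2 - (J * G1 + G1 * Jᴴ) + Δt • (J * G2 + G2 * Jᴴ) + J * (G0 * Jᴴ)
            - (2*Δt) • (J * (G1 * Jᴴ)) + (Δt^2) • (J * (G2 * Jᴴ)))
        + r^3 • (-(J * G2 + G2 * Jᴴ) + J * (G1 * Jᴴ) - (2*Δt) • (J * (G2 * Jᴴ)))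
        + r^4 • (J * (G2 * Jᴴ)) := by
    funext r
    simp only [mul_add, add_mul, sub_mul, mul_sub, one_mul, mul_one, smul_mul_assoc,
      mul_smul_comm, smul_smul, smul_add, smul_sub, mul_assoc, sub_smul, add_smul]
    module
  rw [hfun, iteratedDeriv_two_poly4]
  module

set_option maxHeartbeats 1000000

/-- Lemma 7 of the paper (Hessian bound): with
`Ψ(s)(F) = (I + (Δt-s)J) 𝓛_L((I + sJ) F (I + sJ)ᴴ) (I + (Δt-s)J)ᴴ`,
for `s ∈ [0, Δt]` and Hermitian `F` with `‖F‖₁ ≤ 1`, the second derivative of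
`r ↦ Ψ(r)(F)` at `s` has trace norm at most `12 κ_L ‖J‖₁² e^{‖J‖₁ Δt}`. -/
theorem hessian_bound {d κ : ℕ} (hd : 1 ≤ d) (hκ : 1 ≤ κ)
    (H : Matrix (Fin d) (Fin d) ℂ) (hH : H.IsHermitian)
    (L : Fin κ → Matrix (Fin d) (Fin d) ℂ)
    (Heff J : Matrix (Fin d) (Fin d) ℂ)
    (hHeff : Heff = H - (Complex.I / 2) • ∑ k, (L k)ᴴ * L k)
    (hJ : J = -(Complex.I • Heff))
    (κL : ℝ) (hκL : 0 ≤ κL)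
    (hbound : ∀ F : Matrix (Fin d) (Fin d) ℂ, F.IsHermitian →
      traceNorm ((LLop L) F) ≤ κL * traceNorm F)
    (Δt : ℝ) (hΔt : 0 ≤ Δt)
    (Ψ : ℝ → Matrix (Fin d) (Fin d) ℂ → Matrix (Fin d) (Fin d) ℂ)
    (hΨ : Ψ = fun s F =>
      (1 + (Δt - s) • J) * ((LLop L) ((1 + s • J) * F * (1 + s • J)ᴴ))
        * (1 + (Δt - s) • J)ᴴ) :
    ∀ s ∈ Set.Icc (0 : ℝ) Δt, ∀ F : Matrix (Fin d) (Fin d) ℂ,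
      F.IsHermitian → traceNorm F ≤ 1 →
      traceNorm (iteratedDeriv 2 (fun r => Ψ r F) s)
        ≤ 12 * κL * traceNorm J ^ 2 * Real.exp (traceNorm J * Δt) := by
  intro s hs F hF hFle
  obtain ⟨hs0, hsΔ⟩ := hs
  set k := traceNorm J with hkdef
  have hk0 : 0 ≤ k := traceNorm_nonneg J
  set G0 := (LLop L) F with hG0def
  set G1 := (LLop L) (J * F + F * Jᴴ) with hG1def
  set G2 := (LLop L) (J * (F * Jᴴ)) with hG2def
  -- rewrite the path as a sandwiched quadratic
  have hfun2 : (fun r : ℝ => Ψ r F) = fun r : ℝ =>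
      (1 + (Δt - r) • J) * (G0 + r • G1 + r^2 • G2) * (1 + (Δt - r) • Jᴴ) := by
    funext r
    simp only [hΨ]
    rw [conjTranspose_one_add_smul J r, conjTranspose_one_add_smul J (Δt - r), mid_expand J F r,
      map_add, map_add, LinearMap.map_smul_of_tower, LinearMap.map_smul_of_tower,
      ← hG0def, ← hG1def, ← hG2def]
  rw [hfun2, second_deriv_psi J G0 G1 G2 Δt s]
  -- component bounds
  have hFtn0 : 0 ≤ traceNorm F := traceNorm_nonneg F
  have htnJc : traceNorm Jᴴ = k := traceNorm_conjTranspose J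
  have hJFle : traceNorm (J * F) ≤ k :=
    (traceNorm_mul_le J F).trans (mul_le_of_le_one_right hk0 hFle)
  have hFJle : traceNorm (F * Jᴴ) ≤ k := by
    refine (traceNorm_mul_le F Jᴴ).trans ?_
    rw [htnJc]
    exact mul_le_of_le_one_left hk0 hFle
  have hJFJle : traceNorm (J * (F * Jᴴ)) ≤ k * k :=
    (traceNorm_mul_le J (F * Jᴴ)).trans (mul_le_mul_of_nonneg_left hFJle hk0)
  have hH1 : (J * F + F * Jᴴ).IsHermitian := by
    unfold Matrix.IsHermitian
    rw [Matrix.conjTranspose_add, Matrix.conjTranspose_mul, Matrix.conjTranspose_mul,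
      Matrix.conjTranspose_conjTranspose, hF.eq]
    exact add_comm _ _
  have hH2 : (J * (F * Jᴴ)).IsHermitian := by
    unfold Matrix.IsHermitian
    rw [Matrix.conjTranspose_mul, Matrix.conjTranspose_mul,
      Matrix.conjTranspose_conjTranspose, hF.eq, mul_assoc]
  have hbG0 : traceNorm G0 ≤ κL := by
    have h := hbound F hF
    rw [← hG0def] at h
    exact h.trans (mul_le_of_le_one_right hκL hFle)
  have hbG1 : traceNorm G1 ≤ κL * (k + k) := by
    have h := hbound _ hH1
    rw [← hG1def] at h
    refine h.trans (mul_le_mul_of_nonneg_left ?_ hκL)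
    exact (traceNorm_add_le _ _).trans (add_le_add hJFle hFJle)
  have hbG2 : traceNorm G2 ≤ κL * (k * k) := by
    have h := hbound _ hH2
    rw [← hG2def] at h
    exact h.trans (mul_le_mul_of_nonneg_left hJFJle hκL)
  -- sandwich and wing bounds
  have hsand : ∀ (X : Matrix (Fin d) (Fin d) ℂ) (bX : ℝ), traceNorm X ≤ bX →
      traceNorm (J * (X * Jᴴ)) ≤ k * (bX * k) := by
    intro X bX hX
    refine (traceNorm_mul_le J (X * Jᴴ)).trans (mul_le_mul_of_nonneg_left ?_ hk0)
    refine (traceNorm_mul_le X Jᴴ).trans ?_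
    rw [htnJc]
    exact mul_le_mul_of_nonneg_right hX hk0
  have hwing : ∀ (X : Matrix (Fin d) (Fin d) ℂ) (bX : ℝ), traceNorm X ≤ bX →
      traceNorm (J * X + X * Jᴴ) ≤ k * bX + bX * k := by
    intro X bX hX
    refine (traceNorm_add_le _ _).trans (add_le_add ?_ ?_)
    · exact (traceNorm_mul_le J X).trans (mul_le_mul_of_nonneg_left hX hk0)
    · refine (traceNorm_mul_le X Jᴴ).trans ?_
      rw [htnJc]
      exact mul_le_mul_of_nonneg_right hX hk0
  -- absolute value bounds for the coefficients
  have habs1 : |2*Δt-6*s| ≤ 4*s + 2*(Δt-s) := by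
    rw [abs_le]; constructor <;> linarith
  have habs2 : |6*s-4*Δt| ≤ 2*s + 4*(Δt-s) := by
    rw [abs_le]; constructor <;> linarith
  have habs3 : |2*Δt^2-12*s*Δt+12*s^2| ≤ 2*s^2 + 8*(s*(Δt-s)) + 2*(Δt-s)^2 := by
    rw [abs_le]; constructor <;> nlinarith [sq_nonneg (Δt - s), sq_nonneg s, mul_nonneg hs0 (sub_nonneg.mpr hsΔ)]
  -- the six term bounds
  have hT1 : traceNorm ((2:ℝ) • G2) ≤ 2 * (κL * (k * k)) := by
    refine (traceNorm_smul_le 2 G2).trans ?_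
    rw [abs_of_nonneg (by norm_num : (0:ℝ) ≤ 2)]
    exact mul_le_mul_of_nonneg_left hbG2 (by norm_num)
  have hT2 : traceNorm ((-2:ℝ) • (J * G1 + G1 * Jᴴ))
      ≤ 2 * (k * (κL * (k + k)) + (κL * (k + k)) * k) := by
    refine (traceNorm_smul_le (-2) _).trans ?_
    rw [show |(-2:ℝ)| = 2 by norm_num]
    exact mul_le_mul_of_nonneg_left (hwing G1 _ hbG1) (by norm_num)
  have hT3 : traceNorm ((2*Δt-6*s) • (J * G2 + G2 * Jᴴ))
      ≤ (4*s + 2*(Δt-s)) * (k * (κL * (k * k)) + (κL * (k * k)) * k) := by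
    refine (traceNorm_smul_le _ _).trans ?_
    exact mul_le_mul habs1 (hwing G2 _ hbG2) (traceNorm_nonneg _) (by linarith)
  have hT4 : traceNorm ((2:ℝ) • (J * (G0 * Jᴴ))) ≤ 2 * (k * (κL * k)) := by
    refine (traceNorm_smul_le 2 _).trans ?_
    rw [abs_of_nonneg (by norm_num : (0:ℝ) ≤ 2)]
    exact mul_le_mul_of_nonneg_left (hsand G0 _ hbG0) (by norm_num)
  have hT5 : traceNorm ((6*s-4*Δt) • (J * (G1 * Jᴴ)))
      ≤ (2*s + 4*(Δt-s)) * (k * ((κL * (k + k)) * k)) := by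
    refine (traceNorm_smul_le _ _).trans ?_
    exact mul_le_mul habs2 (hsand G1 _ hbG1) (traceNorm_nonneg _) (by linarith)
  have hT6 : traceNorm ((2*Δt^2-12*s*Δt+12*s^2) • (J * (G2 * Jᴴ)))
      ≤ (2*s^2 + 8*(s*(Δt-s)) + 2*(Δt-s)^2) * (k * ((κL * (k * k)) * k)) := by
    refine (traceNorm_smul_le _ _).trans ?_
    refine mul_le_mul habs3 (hsand G2 _ hbG2) (traceNorm_nonneg _) ?_
    nlinarith [sq_nonneg (Δt - s), sq_nonneg s, mul_nonneg hs0 (sub_nonneg.mpr hsΔ)]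
  -- exponential bound
  have ha : 0 ≤ k * Δt := mul_nonneg hk0 hΔt
  have hc : (k*Δt/3 + 1)^3 ≤ Real.exp (k*Δt/3)^3 :=
    pow_le_pow_left₀ (by linarith) (Real.add_one_le_exp (k*Δt/3)) 3
  have hd : Real.exp (k*Δt/3)^3 = Real.exp (k*Δt) := by
    rw [← Real.exp_nat_mul]
    congr 1
    ring
  have hexp : 12 + 12*(k*Δt) + 4*(k*Δt)^2 ≤ 12*Real.exp (k*Δt) := by
    nlinarith [ha, hc, hd, mul_nonneg ha (mul_nonneg ha ha)]
  -- assemble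
  calc traceNorm ((2:ℝ) • G2 + (-2:ℝ) • (J * G1 + G1 * Jᴴ) + (2*Δt-6*s) • (J * G2 + G2 * Jᴴ)
        + (2:ℝ) • (J * (G0 * Jᴴ)) + (6*s-4*Δt) • (J * (G1 * Jᴴ))
        + (2*Δt^2-12*s*Δt+12*s^2) • (J * (G2 * Jᴴ)))
      ≤ 2 * (κL * (k * k)) + 2 * (k * (κL * (k + k)) + (κL * (k + k)) * k)
        + (4*s + 2*(Δt-s)) * (k * (κL * (k * k)) + (κL * (k * k)) * k)
        + 2 * (k * (κL * k)) + (2*s + 4*(Δt-s)) * (k * ((κL * (k + k)) * k))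
        + (2*s^2 + 8*(s*(Δt-s)) + 2*(Δt-s)^2) * (k * ((κL * (k * k)) * k)) := by
        refine (traceNorm_add_le _ _).trans (add_le_add ?_ hT6)
        refine (traceNorm_add_le _ _).trans (add_le_add ?_ hT5)
        refine (traceNorm_add_le _ _).trans (add_le_add ?_ hT4)
        refine (traceNorm_add_le _ _).trans (add_le_add ?_ hT3)
        exact (traceNorm_add_le _ _).trans (add_le_add hT1 hT2)
    _ ≤ 12 * κL * k ^ 2 * Real.exp (k * Δt) := by
        have h3 : κL*k^2*(12 + 12*(k*Δt) + 4*(k*Δt)^2) ≤ κL*k^2*(12*Real.exp (k*Δt)) :=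
          mul_le_mul_of_nonneg_left hexp (mul_nonneg hκL (sq_nonneg k))
        nlinarith [h3, mul_nonneg (mul_nonneg hκL (pow_nonneg hk0 4)) (sq_nonneg (2*s-Δt)),
          mul_nonneg (mul_nonneg hκL (pow_nonneg hk0 4)) (sq_nonneg Δt)]
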